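/- arXiv:1401.8047 — 7 statements merged into one kernel-verified Lean document; each statement's English description precedes it below -/
import Mathlib

section
/- Let (X, d) be a pseudometric space, μ a Borel measure on X, x ∈ X and r > 0 such that 0 < μ(B(x,ρ)) < ∞ for all ρ ∈ (0, 2r]. Let C > 1 and let δ : (0, 2r] → (0, ∞) be nondecreasing with δ(ρ) > 0 for all ρ, and suppose that μ(B(x, ρ + δ(ρ))) ≤ 2C · μ(B(x, ρ)) for every ρ ∈ [r, 2r]. Then μ(B(x, 2r)) ≤ (2C)^{r/δ(r) + 1} · μ(B(x, r)). -/
open Metric MeasureTheory Set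

/-- If the metric balls around `x` have non-doubling order at most `δ` with constant `2C`
on radii in `[r, 2r]`, then `μ(B(x,2r)) ≤ (2C)^(r/δ(r)+1) · μ(B(x,r))`. -/
theorem stmt0 {X : Type*} [PseudoMetricSpace X] [MeasurableSpace X] [BorelSpace X]
    (μ : Measure X) (x : X) (r : ℝ) (hr : 0 < r)
    (hμ : ∀ ρ ∈ Ioc (0 : ℝ) (2 * r), 0 < μ (ball x ρ) ∧ μ (ball x ρ) < ⊤)
    (C : ℝ) (hC : 1 < C)
    (δ : ℝ → ℝ) (hδpos : ∀ ρ ∈ Ioc (0 : ℝ) (2 * r), 0 < δ ρ)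
    (hδmono : MonotoneOn δ (Ioc (0 : ℝ) (2 * r)))
    (hdoub : ∀ ρ ∈ Icc r (2 * r),
      μ (ball x (ρ + δ ρ)) ≤ ENNReal.ofReal (2 * C) * μ (ball x ρ)) :
    μ (ball x (2 * r)) ≤ ENNReal.ofReal (2 * C) ^ (r / δ r + 1) * μ (ball x r) := by
  have hrmem : r ∈ Ioc (0 : ℝ) (2 * r) := ⟨hr, by linarith⟩
  set d := δ r with hd
  have hdpos : 0 < d := hδpos r hrmem
  set N : ℕ := ⌈r / d⌉₊ with hN
  have hrd : 0 < r / d := div_pos hr hdpos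
  have hNge : r / d ≤ (N : ℝ) := Nat.le_ceil _
  have hNlt : (N : ℝ) < r / d + 1 := Nat.ceil_lt_add_one hrd.le
  have hbase : (1 : ENNReal) ≤ ENNReal.ofReal (2 * C) := by
    rw [ENNReal.one_le_ofReal]; linarith
  have key : ∀ n : ℕ, n ≤ N →
      μ (ball x (r + n * d)) ≤ ENNReal.ofReal (2 * C) ^ n * μ (ball x r) := by
    intro n hn
    induction n with
    | zero => simp
    | succ n ih =>
      have hn' : n ≤ N := Nat.le_of_succ_le hn
      have hnlt : (n : ℝ) < r / d := by
        have : (n : ℝ) + 1 ≤ N := by exact_mod_cast hn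
        linarith
      have hnd : (n : ℝ) * d < r := by
        have := (lt_div_iff₀ hdpos).mp hnlt
        nlinarith
      set ρ := r + n * d with hρ
      have hρmem : ρ ∈ Icc r (2 * r) := by
        constructor
        · have : 0 ≤ (n : ℝ) * d := by positivity
          linarith
        · linarith
      have hρIoc : ρ ∈ Ioc (0 : ℝ) (2 * r) := ⟨by linarith [hρmem.1], hρmem.2⟩
      have hdle : d ≤ δ ρ := hδmono hrmem hρIoc hρmem.1
      have hsub : ball x (ρ + d) ⊆ ball x (ρ + δ ρ) :=
        ball_subset_ball (by linarith)
      calc μ (ball x (r + (n + 1 : ℕ) * d)) = μ (ball x (ρ + d)) := by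
            congr 2; rw [hρ]; push_cast; ring
        _ ≤ μ (ball x (ρ + δ ρ)) := measure_mono hsub
        _ ≤ ENNReal.ofReal (2 * C) * μ (ball x ρ) := hdoub ρ hρmem
        _ ≤ ENNReal.ofReal (2 * C) * (ENNReal.ofReal (2 * C) ^ n * μ (ball x r)) :=
            mul_le_mul_right (ih hn') _
        _ = ENNReal.ofReal (2 * C) ^ (n + 1) * μ (ball x r) := by ring
  have h2r : 2 * r ≤ r + N * d := by
    have : r ≤ (N : ℝ) * d := by
      have := (div_le_iff₀ hdpos).mp hNge
      linarith
    linarith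
  calc μ (ball x (2 * r)) ≤ μ (ball x (r + N * d)) :=
        measure_mono (ball_subset_ball h2r)
    _ ≤ ENNReal.ofReal (2 * C) ^ N * μ (ball x r) := key N le_rfl
    _ ≤ ENNReal.ofReal (2 * C) ^ (r / δ r + 1) * μ (ball x r) := by
        refine mul_le_mul_left ?_ _
        rw [← ENNReal.rpow_natCast]
        exact ENNReal.rpow_le_rpow_of_exponent_le hbase (by rw [← hd]; linarith)
end

section
/- Let (X, d) be a pseudometric space, μ a Borel measure on X, x ∈ X and r > 0 such that 0 < μ(B(x,ρ)) < ∞ for all ρ ∈ (0, 2r]. Let δ : (0, 2r] → (0, ∞) be nondecreasing, and suppose that μ(B(x, ρ + δ(ρ))) ≥ (5/4) · μ(B(x, ρ)) for every ρ ∈ [r, 2r]. Then μ(B(x, 2r)) ≥ (5/4)^{r/δ(2r) − 1} · μ(B(x, r)). -/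
open Metric MeasureTheory Set

private noncomputable def seqAux (δ : ℝ → ℝ) (r : ℝ) : ℕ → ℝ
  | 0 => r
  | k + 1 => seqAux δ r k + δ (seqAux δ r k)

/-- If the metric balls around `x` grow by a factor at least `5/4` when the radius increases
from `ρ` to `ρ + δ(ρ)` for `ρ ∈ [r, 2r]`, then `μ(B(x,2r)) ≥ (5/4)^(r/δ(2r) − 1) · μ(B(x,r))`. -/
theorem stmt1 {X : Type*} [PseudoMetricSpace X] [MeasurableSpace X] [BorelSpace X]
    (μ : Measure X) (x : X) (r : ℝ) (hr : 0 < r)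
    (hμ : ∀ ρ ∈ Ioc (0 : ℝ) (2 * r), 0 < μ (ball x ρ) ∧ μ (ball x ρ) < ⊤)
    (δ : ℝ → ℝ) (hδpos : ∀ ρ ∈ Ioc (0 : ℝ) (2 * r), 0 < δ ρ)
    (hδmono : MonotoneOn δ (Ioc (0 : ℝ) (2 * r)))
    (hgrow : ∀ ρ ∈ Icc r (2 * r),
      ENNReal.ofReal (5 / 4) * μ (ball x ρ) ≤ μ (ball x (ρ + δ ρ))) :
    ENNReal.ofReal (5 / 4) ^ (r / δ (2 * r) - 1) * μ (ball x r) ≤ μ (ball x (2 * r)) := by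
  set D := δ (2 * r) with hD
  have h2r : (2 * r) ∈ Ioc (0 : ℝ) (2 * r) := ⟨by linarith, le_refl _⟩
  have hDpos : 0 < D := hδpos _ h2r
  set c : ENNReal := ENNReal.ofReal (5 / 4) with hc
  have hc1 : 1 ≤ c := by
    rw [hc]; exact ENNReal.one_le_ofReal.mpr (by norm_num)
  set N := ⌊r / D⌋₊ with hN
  have hNle : (N : ℝ) ≤ r / D := Nat.floor_le (le_of_lt (div_pos hr hDpos))
  have hND : (N : ℝ) * D ≤ r := by
    have := mul_le_mul_of_nonneg_right hNle hDpos.le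
    rwa [div_mul_cancel₀ _ (ne_of_gt hDpos)] at this
  have key : ∀ k, k ≤ N → r ≤ seqAux δ r k ∧ seqAux δ r k ≤ r + k * D ∧
      c ^ k * μ (ball x r) ≤ μ (ball x (seqAux δ r k)) := by
    intro k hk
    induction k with
    | zero => simp [seqAux]
    | succ k ih =>
      obtain ⟨h1, h2, h3⟩ := ih (le_of_lt (lt_of_lt_of_le (Nat.lt_succ_self k) hk))
      have hk1D : ((k : ℝ) + 1) * D ≤ r := by
        have : ((k : ℝ) + 1) ≤ (N : ℝ) := by exact_mod_cast hk
        nlinarith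
      have hkD : (k : ℝ) * D ≤ r := by nlinarith
      have hρ2r : seqAux δ r k ≤ 2 * r := by linarith
      have hmem : seqAux δ r k ∈ Ioc (0 : ℝ) (2 * r) := ⟨by linarith, hρ2r⟩
      have hδle : δ (seqAux δ r k) ≤ D := hδmono hmem h2r hρ2r
      have hδp : 0 < δ (seqAux δ r k) := hδpos _ hmem
      refine ⟨?_, ?_, ?_⟩
      · show r ≤ seqAux δ r k + δ (seqAux δ r k)
        linarith
      · show seqAux δ r k + δ (seqAux δ r k) ≤ r + (k + 1 : ℕ) * D
        push_cast
        linarith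
      · have hg := hgrow (seqAux δ r k) ⟨h1, hρ2r⟩
        calc c ^ (k + 1) * μ (ball x r) = c * (c ^ k * μ (ball x r)) := by ring
          _ ≤ c * μ (ball x (seqAux δ r k)) := mul_le_mul_right h3 c
          _ ≤ μ (ball x (seqAux δ r k + δ (seqAux δ r k))) := hg
          _ = μ (ball x (seqAux δ r (k + 1))) := rfl
  obtain ⟨h1, h2, h3⟩ := key N le_rfl
  have hfin : μ (ball x (seqAux δ r N)) ≤ μ (ball x (2 * r)) :=
    measure_mono (ball_subset_ball (by linarith))
  have hexp : c ^ (r / D - 1) ≤ c ^ N := by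
    have h := ENNReal.rpow_le_rpow_of_exponent_le hc1
      (le_of_lt (Nat.sub_one_lt_floor (r / D)))
    rwa [ENNReal.rpow_natCast] at h
  calc c ^ (r / D - 1) * μ (ball x r) ≤ c ^ N * μ (ball x r) := mul_le_mul_left hexp _
    _ ≤ μ (ball x (seqAux δ r N)) := h3
    _ ≤ μ (ball x (2 * r)) := hfin
end

section
/- (Oscillation iteration.) Let ν₀ ∈ (0, 1), K ≥ 0 and R > 0. Let ω : (0, R] → [0, ∞) be nondecreasing and γ : (0, R] → (0, 1) be nonincreasing, and suppose ω(ν₀ ρ) ≤ γ(ρ) ω(ρ) + ρ² K for every ρ ∈ (0, R]. Then for every μ ∈ (0, 1) and every r ∈ (0, R], ω(r) ≤ γ(r)^{−1} (r/R)^{(1−μ) ln γ(r)/ln ν₀} ω(R) + (K R² / (1 − γ(r))) · (r/R)^{2μ}. -/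
open Set

/-- Oscillation iteration: if `ω(ν₀ρ) ≤ γ(ρ) ω(ρ) + ρ² K` for all `ρ ∈ (0, R]`, then for every
`μ ∈ (0,1)` and `r ∈ (0, R]`,
`ω(r) ≤ γ(r)⁻¹ (r/R)^((1−μ) ln γ(r)/ln ν₀) ω(R) + (K R²/(1 − γ(r))) (r/R)^(2μ)`. -/
theorem stmt4 (ν₀ : ℝ) (hν₀ : ν₀ ∈ Set.Ioo (0 : ℝ) 1) (K R : ℝ) (hK : 0 ≤ K) (hR : 0 < R)
    (ω γ : ℝ → ℝ)
    (hω0 : ∀ ρ ∈ Set.Ioc (0 : ℝ) R, 0 ≤ ω ρ)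
    (hωmono : MonotoneOn ω (Set.Ioc (0 : ℝ) R))
    (hγ : ∀ ρ ∈ Set.Ioc (0 : ℝ) R, γ ρ ∈ Set.Ioo (0 : ℝ) 1)
    (hγanti : AntitoneOn γ (Set.Ioc (0 : ℝ) R))
    (hiter : ∀ ρ ∈ Set.Ioc (0 : ℝ) R, ω (ν₀ * ρ) ≤ γ ρ * ω ρ + ρ ^ 2 * K) :
    ∀ μ ∈ Set.Ioo (0 : ℝ) 1, ∀ r ∈ Set.Ioc (0 : ℝ) R,
      ω r ≤ (γ r)⁻¹ * (r / R) ^ ((1 - μ) * Real.log (γ r) / Real.log ν₀) * ω R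
        + (K * R ^ 2 / (1 - γ r)) * (r / R) ^ (2 * μ) := by
  obtain ⟨hν0, hν1⟩ := hν₀
  rintro μ ⟨hμ0, hμ1⟩ r ⟨hr0, hrR⟩
  have hrmem : r ∈ Set.Ioc (0 : ℝ) R := ⟨hr0, hrR⟩
  set g : ℝ := γ r with hgdef
  obtain ⟨hg0, hg1⟩ := hγ r hrmem
  have h1g : (0 : ℝ) < 1 - g := by linarith
  -- the intermediate radius
  set R₁ : ℝ := r ^ μ * R ^ (1 - μ) with hR₁def
  have hR₁pos : 0 < R₁ := mul_pos (Real.rpow_pos_of_pos hr0 _) (Real.rpow_pos_of_pos hR _)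
  have hrR₁ : r ≤ R₁ := by
    have h1 : r = r ^ μ * r ^ (1 - μ) := by
      rw [← Real.rpow_add hr0]
      norm_num
    rw [h1]
    exact mul_le_mul_of_nonneg_left
      (Real.rpow_le_rpow hr0.le hrR (by linarith)) (Real.rpow_nonneg hr0.le _)
  have hR₁R : R₁ ≤ R := by
    have h1 : R = R ^ μ * R ^ (1 - μ) := by
      rw [← Real.rpow_add hR]
      norm_num
    rw [h1]
    exact mul_le_mul_of_nonneg_right
      (Real.rpow_le_rpow hr0.le hrR hμ0.le) (Real.rpow_nonneg hR.le _)
  have hR₁mem : R₁ ∈ Set.Ioc (0 : ℝ) R := ⟨hR₁pos, hR₁R⟩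
  have hRmem : R ∈ Set.Ioc (0 : ℝ) R := ⟨hR, le_refl R⟩
  -- membership of the iterates
  have hmem : ∀ n : ℕ, ν₀ ^ n * R₁ ∈ Set.Ioc (0 : ℝ) R := by
    intro n
    constructor
    · exact mul_pos (pow_pos hν0 n) hR₁pos
    · calc ν₀ ^ n * R₁ ≤ 1 * R₁ :=
            mul_le_mul_of_nonneg_right (pow_le_one₀ hν0.le hν1.le) hR₁pos.le
        _ = R₁ := one_mul _
        _ ≤ R := hR₁R
  set C : ℝ := (1 - g)⁻¹ * (R₁ ^ 2 * K) with hCdef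
  have hCnonneg : 0 ≤ C := by positivity
  -- the key iteration
  have key : ∀ n : ℕ, r ≤ ν₀ ^ n * R₁ → ω (ν₀ ^ n * R₁) ≤ g ^ n * ω R₁ + C := by
    intro n
    induction n with
    | zero =>
      intro _
      simp only [pow_zero, one_mul]
      linarith
    | succ n ih =>
      intro h
      have hmono' : ν₀ ^ (n + 1) * R₁ ≤ ν₀ ^ n * R₁ := by
        have : ν₀ ^ (n + 1) ≤ ν₀ ^ n := pow_le_pow_of_le_one hν0.le hν1.le (by omega)
        exact mul_le_mul_of_nonneg_right this hR₁pos.le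
      have h' : r ≤ ν₀ ^ n * R₁ := le_trans h hmono'
      have IH := ih h'
      set ρ : ℝ := ν₀ ^ n * R₁ with hρdef
      have hρmem : ρ ∈ Set.Ioc (0 : ℝ) R := hmem n
      have heq : ν₀ ^ (n + 1) * R₁ = ν₀ * ρ := by rw [hρdef]; ring
      have h1 := hiter ρ hρmem
      have h2 : γ ρ ≤ g := hγanti hrmem hρmem h'
      have h3 : 0 ≤ ω ρ := hω0 ρ hρmem
      have h4 : γ ρ * ω ρ ≤ g * ω ρ := mul_le_mul_of_nonneg_right h2 h3
      have h5 : ρ ^ 2 ≤ R₁ ^ 2 := by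
        have hρR₁ : ρ ≤ R₁ := by
          calc ρ ≤ 1 * R₁ :=
                mul_le_mul_of_nonneg_right (pow_le_one₀ hν0.le hν1.le) hR₁pos.le
            _ = R₁ := one_mul _
        exact pow_le_pow_left₀ hρmem.1.le hρR₁ 2
      have h6 : g * ω ρ ≤ g * (g ^ n * ω R₁ + C) := mul_le_mul_of_nonneg_left IH hg0.le
      have hC : g * C + R₁ ^ 2 * K = C := by
        rw [hCdef]
        field_simp
        ring
      have h7 : ρ ^ 2 * K ≤ R₁ ^ 2 * K := mul_le_mul_of_nonneg_right h5 hK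
      rw [heq]
      calc ω (ν₀ * ρ) ≤ γ ρ * ω ρ + ρ ^ 2 * K := h1
        _ ≤ g * (g ^ n * ω R₁ + C) + R₁ ^ 2 * K := by linarith
        _ = g ^ (n + 1) * ω R₁ + (g * C + R₁ ^ 2 * K) := by ring
        _ = g ^ (n + 1) * ω R₁ + C := by rw [hC]
  -- choose the iteration depth m
  have hex : ∃ m : ℕ, ν₀ ^ (m + 1) * R₁ < r := by
    obtain ⟨n, hn⟩ := exists_pow_lt_of_lt_one (div_pos hr0 hR₁pos) hν1
    refine ⟨n, ?_⟩
    have h1 : ν₀ ^ (n + 1) ≤ ν₀ ^ n := pow_le_pow_of_le_one hν0.le hν1.le (by omega)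
    have h2 : ν₀ ^ (n + 1) < r / R₁ := lt_of_le_of_lt h1 hn
    calc ν₀ ^ (n + 1) * R₁ < (r / R₁) * R₁ := by
          exact mul_lt_mul_of_pos_right h2 hR₁pos
      _ = r := by field_simp
  set m : ℕ := Nat.find hex with hmdef
  have hm1 : ν₀ ^ (m + 1) * R₁ < r := Nat.find_spec hex
  have hm2 : r ≤ ν₀ ^ m * R₁ := by
    rcases Nat.eq_zero_or_pos m with h | h
    · rw [h]; simpa using hrR₁
    · have h' := Nat.find_min hex (show m - 1 < m by omega)
      have h'' := not_lt.mp h'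
      rwa [show m - 1 + 1 = m by omega] at h''
  -- logs
  have hlogν : Real.log ν₀ < 0 := Real.log_neg hν0 hν1
  have hlogg : Real.log g < 0 := Real.log_neg hg0 hg1
  have hrRpos : 0 < r / R := div_pos hr0 hR
  set e : ℝ := (1 - μ) * Real.log g / Real.log ν₀ with hedef
  -- bound g^m by g⁻¹ (r/R)^e
  have hgm : g ^ m ≤ g⁻¹ * (r / R) ^ e := by
    have hlogR₁ : Real.log R₁ = μ * Real.log r + (1 - μ) * Real.log R := by
      rw [hR₁def, Real.log_mul (by positivity) (by positivity),
        Real.log_rpow hr0, Real.log_rpow hR]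
    have hlt : (↑(m + 1) : ℝ) * Real.log ν₀ < (1 - μ) * Real.log (r / R) := by
      have h1 : Real.log (ν₀ ^ (m + 1) * R₁) < Real.log r :=
        Real.log_lt_log (by positivity) hm1
      rw [Real.log_mul (by positivity) hR₁pos.ne', Real.log_pow, hlogR₁] at h1
      rw [Real.log_div hr0.ne' hR.ne']
      push_cast at h1 ⊢
      nlinarith
    have ht : 0 < Real.log g / Real.log ν₀ := div_pos_of_neg_of_neg hlogg hlogν
    have hlt2 : (↑(m + 1) : ℝ) * Real.log g ≤ e * Real.log (r / R) := by
      have := mul_le_mul_of_nonneg_right hlt.le ht.le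
      have hν₀ne : Real.log ν₀ ≠ 0 := hlogν.ne
      calc (↑(m + 1) : ℝ) * Real.log g
          = (↑(m + 1) : ℝ) * Real.log ν₀ * (Real.log g / Real.log ν₀) := by
            field_simp
        _ ≤ (1 - μ) * Real.log (r / R) * (Real.log g / Real.log ν₀) := this
        _ = e * Real.log (r / R) := by rw [hedef]; ring
    have hpow : g ^ (m + 1) ≤ (r / R) ^ e := by
      have h1 : g ^ (m + 1) = Real.exp ((↑(m + 1) : ℝ) * Real.log g) := by
        rw [← Real.log_pow, Real.exp_log (by positivity)]
      have h2 : (r / R) ^ e = Real.exp (Real.log (r / R) * e) :=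
        Real.rpow_def_of_pos hrRpos e
      rw [h1, h2]
      exact Real.exp_le_exp.mpr (by linarith [hlt2])
    have : g * g ^ m ≤ (r / R) ^ e := by
      calc g * g ^ m = g ^ (m + 1) := by ring
        _ ≤ (r / R) ^ e := hpow
    calc g ^ m = g⁻¹ * (g * g ^ m) := (inv_mul_cancel_left₀ hg0.ne' _).symm
      _ ≤ g⁻¹ * (r / R) ^ e := mul_le_mul_of_nonneg_left this (by positivity)
  -- identify the second term
  have hsecond : C = (K * R ^ 2 / (1 - g)) * (r / R) ^ (2 * μ) := by
    have h1 : R₁ ^ 2 = R ^ 2 * (r / R) ^ (2 * μ) := by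
      have e1 : (r ^ μ) ^ 2 = r ^ (2 * μ) := by
        rw [sq, ← Real.rpow_add hr0]; ring_nf
      have e2 : (R ^ (1 - μ)) ^ 2 = R ^ (2 - 2 * μ) := by
        rw [sq, ← Real.rpow_add hR]; ring_nf
      have e3 : (r / R) ^ (2 * μ) = r ^ (2 * μ) / R ^ (2 * μ) :=
        Real.div_rpow hr0.le hR.le _
      have e4 : R ^ (2 - 2 * μ) = R ^ (2 : ℝ) / R ^ (2 * μ) := by
        rw [← Real.rpow_sub hR]
      have e5 : R ^ (2 : ℝ) = R ^ (2 : ℕ) := by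
        rw [← Real.rpow_natCast R 2]; norm_num
      rw [hR₁def, mul_pow, e1, e2, e3, e4, e5]
      field_simp
    rw [hCdef, h1]
    field_simp
  -- assemble
  have hωr : ω r ≤ ω (ν₀ ^ m * R₁) := hωmono hrmem (hmem m) hm2
  have hωR₁ : ω R₁ ≤ ω R := hωmono hR₁mem hRmem hR₁R
  have hωR₁0 : 0 ≤ ω R₁ := hω0 R₁ hR₁mem
  have hfirst : g ^ m * ω R₁ ≤ g⁻¹ * (r / R) ^ e * ω R :=
    mul_le_mul hgm hωR₁ hωR₁0 (by positivity)
  calc ω r ≤ ω (ν₀ ^ m * R₁) := hωr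
    _ ≤ g ^ m * ω R₁ + C := key m hm2
    _ ≤ g⁻¹ * (r / R) ^ e * ω R + C := by linarith
    _ = g⁻¹ * (r / R) ^ e * ω R + (K * R ^ 2 / (1 - g)) * (r / R) ^ (2 * μ) := by
        rw [hsecond]
end

section
/- (Analytic content of the continuity theorem.) Let σ > 1, λ = (5σ − 1)/(σ − 1), C > 1, ν₀ ∈ (0, 1), μ ∈ (0, 1), R ∈ (0, 1) and A ≥ 0. Let δ : (0, R] → (0, ∞) satisfy δ(r) < r for all r, lim_{r→0⁺} δ(r)/r = 0, and the growth condition lim_{r→0⁺} (ln r) · ln( 1 − (1/(2C)) exp( −2 (r/δ(r))^{λ} ) ) = +∞. Define C_H(r) = C · exp( 2 (ν₀ r / δ(ν₀ r))^{λ} ) and α(r) = (1 − μ) · ln(1 − 1/(2 C_H(r))) / ln ν₀. If ω : (0, R] → [0, ∞) satisfies ω(r) ≤ A (r/R)^{α(r)} + A · C_H(r) · (r/R)^{2μ} for all r ∈ (0, R], then lim_{r→0⁺} ω(r) = 0. -/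
open Filter Set

/-- Auxiliary: abstract form of the continuity statement. -/
lemma stmt7_aux (C ν₀ μ R A : ℝ) (hC : 1 < C)
    (hν₀ : ν₀ ∈ Set.Ioo (0 : ℝ) 1) (hμ : μ ∈ Set.Ioo (0 : ℝ) 1)
    (hR : R ∈ Set.Ioo (0 : ℝ) 1) (hA : 0 ≤ A)
    (CH : ℝ → ℝ) (hCH : ∀ r ∈ Set.Ioc (0 : ℝ) R, C ≤ CH r)
    (hA1 : Tendsto (fun r => Real.log r * Real.log (1 - 1 / (2 * CH r)))
      (nhdsWithin 0 (Set.Ioi 0)) atTop)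
    (ω : ℝ → ℝ)
    (hω : ∀ r ∈ Set.Ioc (0 : ℝ) R, 0 ≤ ω r ∧
      ω r ≤ A * (r / R) ^ ((1 - μ) * Real.log (1 - 1 / (2 * CH r)) / Real.log ν₀)
        + A * CH r * (r / R) ^ (2 * μ)) :
    Tendsto ω (nhdsWithin 0 (Set.Ioi 0)) (nhds 0) := by
  obtain ⟨hν0, hν1⟩ := hν₀
  obtain ⟨hμ0, hμ1⟩ := hμ
  obtain ⟨hR0, hR1⟩ := hR
  have hC0 : (0:ℝ) < C := one_pos.trans hC
  have hlν : Real.log ν₀ < 0 := Real.log_neg hν0 hν1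
  have hlR : Real.log R < 0 := Real.log_neg hR0 hR1
  have hIoc : Set.Ioc (0:ℝ) R ∈ nhdsWithin (0:ℝ) (Set.Ioi 0) :=
    Ioc_mem_nhdsGT_of_mem ⟨le_refl 0, hR0⟩
  have hxC : 1 / (2*C) < 1/2 := by
    rw [div_lt_div_iff₀ (by positivity) (by norm_num)]; linarith
  -- key pointwise facts
  have key : ∀ r ∈ Set.Ioc (0:ℝ) R,
      0 < CH r ∧
      Real.log (1 - 1/(2*C)) ≤ Real.log (1 - 1/(2 * CH r)) ∧
      Real.log (1 - 1/(2 * CH r)) ≤ 0 ∧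
      -Real.log (1 - 1/(2 * CH r)) ≤ 1 / CH r := by
    intro r hr
    have hCHr := hCH r hr
    have hCHpos : 0 < CH r := hC0.trans_le hCHr
    have hxpos : 0 < 1/(2*CH r) := by positivity
    have hxle : 1/(2*CH r) ≤ 1/(2*C) :=
      one_div_le_one_div_of_le (by positivity) (by linarith)
    have hxhalf : 1/(2*CH r) < 1/2 := lt_of_le_of_lt hxle hxC
    refine ⟨hCHpos, ?_, ?_, ?_⟩
    · exact Real.log_le_log (by linarith) (by linarith)
    · exact Real.log_nonpos (by linarith) (by linarith)
    · -- -log(1-x) ≤ x/(1-x) ≤ 2x = 1/CH r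
      set x := 1/(2*CH r) with hxdef
      have h1x : (0:ℝ) < 1 - x := by linarith
      have h1 : -Real.log (1 - x) = Real.log (1-x)⁻¹ := (Real.log_inv _).symm
      have h2 : Real.log (1-x)⁻¹ ≤ (1-x)⁻¹ - 1 :=
        Real.log_le_sub_one_of_pos (by positivity)
      have h3 : (1-x)⁻¹ - 1 ≤ 2 * x := by
        rw [inv_eq_one_div, div_sub' h1x.ne', div_le_iff₀ h1x]
        nlinarith
      have h4 : 2 * x = 1 / CH r := by
        rw [hxdef]; field_simp
      rw [h1]
      linarith
  -- First term tends to 0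
  have hE : Tendsto (fun r => Real.log (r/R) *
      ((1-μ) * Real.log (1 - 1/(2 * CH r)) / Real.log ν₀))
      (nhdsWithin 0 (Set.Ioi 0)) atBot := by
    have hcneg : (1-μ)/Real.log ν₀ < 0 := div_neg_of_pos_of_neg (by linarith) hlν
    have hlim : Tendsto (fun r => (1-μ)/Real.log ν₀ *
        (Real.log r * Real.log (1 - 1/(2 * CH r)))
        + (-Real.log R) * ((1-μ) * Real.log (1 - 1/(2*C)) / Real.log ν₀))
        (nhdsWithin 0 (Set.Ioi 0)) atBot :=
      tendsto_atBot_add_const_right _ _ ((tendsto_const_mul_atBot_of_neg hcneg).2 hA1)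
    apply tendsto_atBot_mono' _ _ hlim
    filter_upwards [hIoc] with r hr
    obtain ⟨hCHpos, hfge, hfle, _⟩ := key r hr
    have hlog : Real.log (r/R) = Real.log r - Real.log R :=
      Real.log_div hr.1.ne' hR0.ne'
    have hB : (1-μ) * Real.log (1 - 1/(2 * CH r)) / Real.log ν₀
        ≤ (1-μ) * Real.log (1 - 1/(2*C)) / Real.log ν₀ := by
      rw [div_le_div_right_of_neg hlν]
      nlinarith
    rw [hlog]
    have h5 : (-Real.log R) * ((1-μ) * Real.log (1 - 1/(2 * CH r)) / Real.log ν₀)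
        ≤ (-Real.log R) * ((1-μ) * Real.log (1 - 1/(2*C)) / Real.log ν₀) :=
      mul_le_mul_of_nonneg_left hB (by linarith)
    calc (Real.log r - Real.log R) * ((1-μ) * Real.log (1 - 1/(2 * CH r)) / Real.log ν₀)
        = (1-μ)/Real.log ν₀ * (Real.log r * Real.log (1 - 1/(2 * CH r)))
          + (-Real.log R) * ((1-μ) * Real.log (1 - 1/(2 * CH r)) / Real.log ν₀) := by ring
      _ ≤ (1-μ)/Real.log ν₀ * (Real.log r * Real.log (1 - 1/(2 * CH r)))
          + (-Real.log R) * ((1-μ) * Real.log (1 - 1/(2*C)) / Real.log ν₀) := by linarith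
  have hT1 : Tendsto (fun r => A * (r/R) ^
      ((1-μ) * Real.log (1 - 1/(2 * CH r)) / Real.log ν₀))
      (nhdsWithin 0 (Set.Ioi 0)) (nhds 0) := by
    have h0 : Tendsto (fun r => A * Real.exp (Real.log (r/R) *
        ((1-μ) * Real.log (1 - 1/(2 * CH r)) / Real.log ν₀)))
        (nhdsWithin 0 (Set.Ioi 0)) (nhds (A * 0)) :=
      (Real.tendsto_exp_atBot.comp hE).const_mul A
    rw [mul_zero] at h0
    apply h0.congr'
    filter_upwards [hIoc] with r hr
    rw [Real.rpow_def_of_pos (div_pos hr.1 hR0)]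
  -- Second term tends to 0
  have hT2 : Tendsto (fun r => A * CH r * (r/R) ^ (2*μ))
      (nhdsWithin 0 (Set.Ioi 0)) (nhds 0) := by
    have hup : Tendsto (fun r : ℝ => (A / R ^ (2*μ)) * (-(Real.log r * r ^ (2*μ))))
        (nhdsWithin 0 (Set.Ioi 0)) (nhds 0) := by
      have := ((tendsto_log_mul_rpow_nhdsGT_zero
        (show (0:ℝ) < 2*μ by linarith)).neg).const_mul (A / R ^ (2*μ))
      simpa using this
    apply tendsto_of_tendsto_of_tendsto_of_le_of_le' tendsto_const_nhds hup
    · filter_upwards [hIoc] with r hr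
      have hCHpos : 0 < CH r := (key r hr).1
      have h0' : 0 ≤ (r/R) ^ (2*μ) := Real.rpow_nonneg (div_nonneg hr.1.le hR0.le) _
      exact mul_nonneg (mul_nonneg hA hCHpos.le) h0'
    · filter_upwards [hIoc, hA1.eventually_ge_atTop 1] with r hr h1
      obtain ⟨hCHpos, hfge, hfle, hfCH⟩ := key r hr
      have hr1 : r < 1 := lt_of_le_of_lt hr.2 hR1
      have hu : 0 < -Real.log r := by
        have := Real.log_neg hr.1 hr1; linarith
      -- 1 ≤ log r * f = (-log r) * (-f) ≤ (-log r) * (1/CH r), hence CH r ≤ -log r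
      have h2 : (1:ℝ) ≤ (-Real.log r) * (1 / CH r) := by
        have heq : Real.log r * Real.log (1 - 1/(2 * CH r))
            = (-Real.log r) * (-Real.log (1 - 1/(2 * CH r))) := by ring
        have h3 : (-Real.log r) * (-Real.log (1 - 1/(2 * CH r)))
            ≤ (-Real.log r) * (1 / CH r) :=
          mul_le_mul_of_nonneg_left hfCH hu.le
        rw [heq] at h1
        linarith
      have hCHle : CH r ≤ -Real.log r := by
        rw [mul_one_div, le_div_iff₀ hCHpos, one_mul] at h2
        linarith
      have hrpow : 0 ≤ (r/R) ^ (2*μ) := Real.rpow_nonneg (div_nonneg hr.1.le hR0.le) _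
      have h6 : A * CH r * (r/R) ^ (2*μ) ≤ A * (-Real.log r) * (r/R) ^ (2*μ) := by
        apply mul_le_mul_of_nonneg_right _ hrpow
        exact mul_le_mul_of_nonneg_left hCHle hA
      have h7 : (r/R) ^ (2*μ) = r ^ (2*μ) / R ^ (2*μ) :=
        Real.div_rpow hr.1.le hR0.le (2*μ)
      have hRp : 0 < R ^ (2*μ) := Real.rpow_pos_of_pos hR0 _
      calc A * CH r * (r/R) ^ (2*μ) ≤ A * (-Real.log r) * (r/R) ^ (2*μ) := h6
        _ = (A / R ^ (2*μ)) * (-(Real.log r * r ^ (2*μ))) := by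
            rw [h7]; ring
  -- Combine
  have hsum := hT1.add hT2
  rw [add_zero] at hsum
  apply tendsto_of_tendsto_of_tendsto_of_le_of_le' tendsto_const_nhds hsum
  · filter_upwards [hIoc] with r hr
    exact (hω r hr).1
  · filter_upwards [hIoc] with r hr
    exact (hω r hr).2

/-- Analytic content of the continuity theorem: with `λ = (5σ−1)/(σ−1)`,
`C_H(r) = C exp(2 (ν₀ r/δ(ν₀ r))^λ)` and
`α(r) = (1−μ) ln(1 − 1/(2 C_H(r)))/ln ν₀`, if the non-doubling order `δ` satisfies the
growth condition `(ln r)·ln(1 − (1/(2C)) exp(−2 (r/δ(r))^λ)) → +∞` as `r → 0⁺`, and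
`ω(r) ≤ A (r/R)^{α(r)} + A C_H(r) (r/R)^{2μ}` for all `r ∈ (0,R]`, then `ω(r) → 0`. -/
theorem stmt7 (σ C ν₀ μ R A : ℝ) (hσ : 1 < σ) (hC : 1 < C)
    (hν₀ : ν₀ ∈ Set.Ioo (0 : ℝ) 1) (hμ : μ ∈ Set.Ioo (0 : ℝ) 1)
    (hR : R ∈ Set.Ioo (0 : ℝ) 1) (hA : 0 ≤ A)
    (δ : ℝ → ℝ)
    (hδ : ∀ r ∈ Set.Ioc (0 : ℝ) R, 0 < δ r ∧ δ r < r)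
    (hδlim : Tendsto (fun r => δ r / r) (nhdsWithin 0 (Set.Ioi 0)) (nhds 0))
    (hgrow : Tendsto
      (fun r => Real.log r *
        Real.log (1 - (1 / (2 * C)) * Real.exp (-2 * (r / δ r) ^ ((5 * σ - 1) / (σ - 1)))))
      (nhdsWithin 0 (Set.Ioi 0)) atTop)
    (ω : ℝ → ℝ)
    (hω : ∀ r ∈ Set.Ioc (0 : ℝ) R, 0 ≤ ω r ∧
      ω r ≤
        A * (r / R) ^
          ((1 - μ) *
            Real.log (1 - 1 / (2 *
              (C * Real.exp (2 * (ν₀ * r / δ (ν₀ * r)) ^ ((5 * σ - 1) / (σ - 1)))))) /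
            Real.log ν₀)
        + A * (C * Real.exp (2 * (ν₀ * r / δ (ν₀ * r)) ^ ((5 * σ - 1) / (σ - 1)))) *
            (r / R) ^ (2 * μ)) :
    Tendsto ω (nhdsWithin 0 (Set.Ioi 0)) (nhds 0) := by
  obtain ⟨hν0, hν1⟩ := hν₀
  obtain ⟨hR0, hR1⟩ := hR
  have hC0 : (0:ℝ) < C := one_pos.trans hC
  have hlν : Real.log ν₀ < 0 := Real.log_neg hν0 hν1
  have hIoc : Set.Ioc (0:ℝ) R ∈ nhdsWithin (0:ℝ) (Set.Ioi 0) :=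
    Ioc_mem_nhdsGT_of_mem ⟨le_refl 0, hR0⟩
  have hmem : ∀ r ∈ Set.Ioc (0:ℝ) R, ν₀ * r ∈ Set.Ioc (0:ℝ) R := by
    intro r hr
    constructor
    · exact mul_pos hν0 hr.1
    · calc ν₀ * r ≤ 1 * r := mul_le_mul_of_nonneg_right hν1.le hr.1.le
        _ = r := one_mul r
        _ ≤ R := hr.2
  -- C ≤ CH r on Ioc 0 R
  have hCH : ∀ r ∈ Set.Ioc (0:ℝ) R,
      C ≤ C * Real.exp (2 * (ν₀ * r / δ (ν₀ * r)) ^ ((5 * σ - 1) / (σ - 1))) := by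
    intro r hr
    have hδp := (hδ (ν₀ * r) (hmem r hr)).1
    have hs : 0 ≤ (ν₀ * r / δ (ν₀ * r)) ^ ((5 * σ - 1) / (σ - 1)) :=
      Real.rpow_nonneg (div_nonneg (mul_pos hν0 hr.1).le hδp.le) _
    nth_rewrite 1 [← mul_one C]
    exact mul_le_mul_of_nonneg_left (Real.one_le_exp (by linarith)) hC0.le
  -- the key limit, from hgrow via r ↦ ν₀ r
  have hA1 : Tendsto (fun r => Real.log r * Real.log (1 - 1 /
      (2 * (C * Real.exp (2 * (ν₀ * r / δ (ν₀ * r)) ^ ((5 * σ - 1) / (σ - 1)))))))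
      (nhdsWithin 0 (Set.Ioi 0)) atTop := by
    have hcomp : Tendsto (fun r : ℝ => ν₀ * r) (nhdsWithin 0 (Set.Ioi 0))
        (nhdsWithin 0 (Set.Ioi 0)) := by
      apply tendsto_nhdsWithin_of_tendsto_nhds_of_eventually_within
      · have : Tendsto (fun r : ℝ => ν₀ * r) (nhds 0) (nhds (ν₀ * 0)) :=
          tendsto_const_nhds.mul tendsto_id
        rw [mul_zero] at this
        exact this.mono_left nhdsWithin_le_nhds
      · filter_upwards [self_mem_nhdsWithin] with r hr
        exact mul_pos hν0 hr
    have hg := hgrow.comp hcomp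
    -- rewrite the composed function
    have hid : ∀ t : ℝ, (1:ℝ) / (2 * C) * Real.exp (-2 * t)
        = 1 / (2 * (C * Real.exp (2 * t))) := by
      intro t
      rw [show (-2:ℝ) * t = -(2 * t) by ring, Real.exp_neg]
      field_simp
    have hg' : Tendsto (fun r => Real.log (ν₀ * r) * Real.log (1 - 1 /
        (2 * (C * Real.exp (2 * (ν₀ * r / δ (ν₀ * r)) ^ ((5 * σ - 1) / (σ - 1)))))))
        (nhdsWithin 0 (Set.Ioi 0)) atTop := by
      apply hg.congr
      intro r
      simp only [Function.comp]
      rw [hid]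
    -- bound below
    set f₀ := Real.log (1 - 1/(2*C)) with hf₀def
    have hlim : Tendsto (fun r => Real.log (ν₀ * r) * Real.log (1 - 1 /
        (2 * (C * Real.exp (2 * (ν₀ * r / δ (ν₀ * r)) ^ ((5 * σ - 1) / (σ - 1))))))
        + (- (Real.log ν₀ * f₀)))
        (nhdsWithin 0 (Set.Ioi 0)) atTop :=
      tendsto_atTop_add_const_right _ _ hg'
    apply tendsto_atTop_mono' _ _ hlim
    filter_upwards [hIoc] with r hr
    set F := Real.log (1 - 1 /
        (2 * (C * Real.exp (2 * (ν₀ * r / δ (ν₀ * r)) ^ ((5 * σ - 1) / (σ - 1)))))) with hF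
    have hCHr := hCH r hr
    have hCHpos : (0:ℝ) < C * Real.exp (2 * (ν₀ * r / δ (ν₀ * r)) ^ ((5 * σ - 1) / (σ - 1))) :=
      hC0.trans_le hCHr
    have hxC : 1 / (2*C) < 1/2 := by
      rw [div_lt_div_iff₀ (by positivity) (by norm_num)]; linarith
    have hxle : 1/(2 * (C * Real.exp (2 * (ν₀ * r / δ (ν₀ * r)) ^ ((5 * σ - 1) / (σ - 1)))))
        ≤ 1/(2*C) :=
      one_div_le_one_div_of_le (by positivity) (by linarith)
    have hFge : f₀ ≤ F := by
      rw [hF, hf₀def]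
      exact Real.log_le_log (by linarith) (by linarith)
    have hlogm : Real.log (ν₀ * r) = Real.log ν₀ + Real.log r :=
      Real.log_mul hν0.ne' hr.1.ne'
    have h8 : Real.log ν₀ * F ≤ Real.log ν₀ * f₀ :=
      mul_le_mul_of_nonpos_left hFge hlν.le
    rw [hlogm]
    nlinarith [h8]
  exact stmt7_aux C ν₀ μ R A hC ⟨hν0, hν1⟩ hμ ⟨hR0, hR1⟩ hA
    (fun r => C * Real.exp (2 * (ν₀ * r / δ (ν₀ * r)) ^ ((5 * σ - 1) / (σ - 1))))
    hCH hA1 ω hω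
end

section
/- Let h : (0, 1] → (0, ∞) be nondecreasing, and define f(x) = exp( −∫ₓ¹ dt/(t h(t)) ) for x ∈ (0, 1]. Then for every r ∈ (0, 1], f(r)/f(r/2) ≥ exp( 1/(2 h(r)) ). In particular, if additionally lim_{x→0⁺} h(x) = 0, then lim_{r→0⁺} f(r)/f(r/2) = +∞. -/
open Filter Set intervalIntegral

/-- For `f(x) = exp(−∫ₓ¹ dt/(t h(t)))` with `h` nondecreasing and positive on `(0,1]`,
one has `f(r)/f(r/2) ≥ exp(1/(2h(r)))`; in particular, if moreover `h(x) → 0` as `x → 0⁺`,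
then `f(r)/f(r/2) → ∞` as `r → 0⁺` (the associated subunit balls are non-doubling). -/
theorem stmt11 (h : ℝ → ℝ)
    (hpos : ∀ x ∈ Set.Ioc (0 : ℝ) 1, 0 < h x)
    (hmono : MonotoneOn h (Set.Ioc (0 : ℝ) 1))
    (f : ℝ → ℝ)
    (hf : ∀ x ∈ Set.Ioc (0 : ℝ) 1, f x = Real.exp (-(∫ t in x..1, 1 / (t * h t)))) :
    (∀ r ∈ Set.Ioc (0 : ℝ) 1, Real.exp (1 / (2 * h r)) ≤ f r / f (r / 2)) ∧
    (Tendsto h (nhdsWithin 0 (Set.Ioi 0)) (nhds 0) →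
      Tendsto (fun r => f r / f (r / 2)) (nhdsWithin 0 (Set.Ioi 0)) atTop) := by
  set g : ℝ → ℝ := fun t => 1 / (t * h t) with hg
  have ganti : AntitoneOn g (Set.Ioc (0 : ℝ) 1) := by
    intro s hs t ht hst
    have h1 : 0 < s * h s := mul_pos hs.1 (hpos s hs)
    have h2 : s * h s ≤ t * h t :=
      mul_le_mul hst (hmono hs ht hst) (le_of_lt (hpos s hs)) (le_of_lt ht.1)
    exact one_div_le_one_div_of_le h1 h2
  have gint : ∀ a b : ℝ, 0 < a → a ≤ b → b ≤ 1 → IntervalIntegrable g MeasureTheory.volume a b := by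
    intro a b ha hab hb1
    apply AntitoneOn.intervalIntegrable
    apply ganti.mono
    rw [Set.uIcc_of_le hab]
    exact Set.Icc_subset_Ioc_iff hab |>.mpr ⟨ha, hb1⟩
  have key : ∀ r ∈ Set.Ioc (0 : ℝ) 1, Real.exp (1 / (2 * h r)) ≤ f r / f (r / 2) := by
    intro r hr
    have hr0 : 0 < r := hr.1
    have hr2 : r / 2 ∈ Set.Ioc (0 : ℝ) 1 := ⟨by linarith, by linarith [hr.2]⟩
    have hhr : 0 < h r := hpos r hr
    have i1 : IntervalIntegrable g MeasureTheory.volume (r / 2) r := gint _ _ hr2.1 (by linarith) hr.2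
    have i2 : IntervalIntegrable g MeasureTheory.volume r 1 := gint _ _ hr0 hr.2 le_rfl
    have hsplit : (∫ t in (r/2)..1, g t) = (∫ t in (r/2)..r, g t) + ∫ t in r..1, g t :=
      (intervalIntegral.integral_add_adjacent_intervals i1 i2).symm
    have hlow : 1 / (2 * h r) ≤ ∫ t in (r/2)..r, g t := by
      have : (∫ t in (r/2)..r, (1 / (r * h r) : ℝ)) ≤ ∫ t in (r/2)..r, g t := by
        apply intervalIntegral.integral_mono_on (by linarith) intervalIntegrable_const i1
        intro t ht
        have ht1 : t ∈ Set.Ioc (0:ℝ) 1 := ⟨lt_of_lt_of_le hr2.1 ht.1, le_trans ht.2 hr.2⟩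
        exact ganti ht1 hr ht.2
      calc 1 / (2 * h r) = (r - r/2) * (1 / (r * h r)) := by field_simp; ring
        _ = ∫ t in (r/2)..r, (1 / (r * h r) : ℝ) := by
            rw [intervalIntegral.integral_const]; simp
        _ ≤ _ := this
    rw [hf r hr, hf (r/2) hr2, ← Real.exp_sub]
    apply Real.exp_le_exp.mpr
    rw [hsplit]
    linarith
  refine ⟨key, fun hlim => ?_⟩
  have hmem : ∀ᶠ r in nhdsWithin (0:ℝ) (Set.Ioi 0), r ∈ Set.Ioc (0:ℝ) 1 := by
    filter_upwards [Ioo_mem_nhdsGT_of_mem (by norm_num : (0:ℝ) ∈ Set.Ico 0 1)] with r hr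
    exact ⟨hr.1, hr.2.le⟩
  have hlim' : Tendsto h (nhdsWithin 0 (Set.Ioi 0)) (nhdsWithin 0 (Set.Ioi 0)) := by
    apply tendsto_nhdsWithin_of_tendsto_nhds_of_eventually_within _ hlim
    filter_upwards [hmem] with r hr using hpos r hr
  have h1 : Tendsto (fun r => 1 / (2 * h r)) (nhdsWithin 0 (Set.Ioi 0)) atTop := by
    have : Tendsto (fun r => (h r)⁻¹) (nhdsWithin 0 (Set.Ioi 0)) atTop :=
      tendsto_inv_nhdsGT_zero.comp hlim'
    have := this.atTop_div_const (by norm_num : (0:ℝ) < 2)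
    apply this.congr
    intro r
    field_simp
  have h2 : Tendsto (fun r => Real.exp (1 / (2 * h r))) (nhdsWithin 0 (Set.Ioi 0)) atTop :=
    Real.tendsto_exp_atTop.comp h1
  apply tendsto_atTop_mono' _ _ h2
  filter_upwards [hmem] with r hr using key r hr
end

section
/- Let h : (0, 1] → (0, ∞) be nondecreasing, and define f(x) = exp( −∫ₓ¹ dt/(t h(t)) ) for x ∈ (0, 1]. Then for every r ∈ (0, 1] with (r/2)(1 + h(r/2)) ≤ 1, one has f( (r + r h(r/2))/2 ) / f(r/2) ≤ e. (Hence, with δ(r) = r h(r/2), the ratio f((r+δ(r))/2)/f(r/2) stays bounded, so δ(r) is an upper bound for the non-doubling order of the associated subunit balls.) -/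
open Filter Set intervalIntegral

/-- For `f(x) = exp(−∫ₓ¹ dt/(t h(t)))` with `h` nondecreasing and positive on `(0,1]`,
and for every `r ∈ (0,1]` with `(r/2)(1 + h(r/2)) ≤ 1`, one has
`f((r + r h(r/2))/2)/f(r/2) ≤ e`; hence with `δ(r) = r h(r/2)` the ratio
`f((r+δ(r))/2)/f(r/2)` stays bounded. -/
theorem stmt12 (h : ℝ → ℝ)
    (hpos : ∀ x ∈ Set.Ioc (0 : ℝ) 1, 0 < h x)
    (hmono : MonotoneOn h (Set.Ioc (0 : ℝ) 1))
    (f : ℝ → ℝ)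
    (hf : ∀ x ∈ Set.Ioc (0 : ℝ) 1, f x = Real.exp (-(∫ t in x..1, 1 / (t * h t)))) :
    ∀ r ∈ Set.Ioc (0 : ℝ) 1, (r / 2) * (1 + h (r / 2)) ≤ 1 →
      f ((r + r * h (r / 2)) / 2) / f (r / 2) ≤ Real.exp 1 := by
  intro r hr hle
  obtain ⟨hr0, hr1⟩ := hr
  set a := r / 2 with ha_def
  have ha0 : 0 < a := by positivity
  have ha1 : a ≤ 1 := by rw [ha_def]; linarith
  have hha : 0 < h a := hpos a ⟨ha0, ha1⟩
  set b := (r + r * h a) / 2 with hb_def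
  have hb_eq : b = a + a * h a := by rw [hb_def, ha_def]; ring
  have hab : a ≤ b := by nlinarith
  have hb1 : b ≤ 1 := by
    have hb' : b = a * (1 + h a) := by rw [hb_def, ha_def]; ring
    rw [hb']; exact hle
  have hb0 : 0 < b := lt_of_lt_of_le ha0 hab
  have hganti : AntitoneOn (fun t => 1 / (t * h t)) (Set.Icc a 1) := by
    intro x hx y hy hxy
    have hx0 : 0 < x := lt_of_lt_of_le ha0 hx.1
    have hy0 : 0 < y := lt_of_lt_of_le ha0 hy.1
    have hhx : 0 < h x := hpos x ⟨hx0, hx.2⟩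
    have hhy : 0 < h y := hpos y ⟨hy0, hy.2⟩
    have hhxy : h x ≤ h y := hmono ⟨hx0, hx.2⟩ ⟨hy0, hy.2⟩ hxy
    have hprod : x * h x ≤ y * h y := by nlinarith
    exact one_div_le_one_div_of_le (by positivity) hprod
  have hint : ∀ u v : ℝ, a ≤ u → u ≤ v → v ≤ 1 →
      IntervalIntegrable (fun t => 1 / (t * h t)) MeasureTheory.volume u v := by
    intro u v hu huv hv
    apply AntitoneOn.intervalIntegrable
    apply hganti.mono
    rw [Set.uIcc_of_le huv]
    intro x hx
    exact ⟨le_trans hu hx.1, le_trans hx.2 hv⟩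
  have i1 := hint a b le_rfl hab hb1
  have i2 := hint b 1 hab hb1 le_rfl
  have hsplit : (∫ t in a..b, 1 / (t * h t)) + (∫ t in b..1, 1 / (t * h t))
      = ∫ t in a..1, 1 / (t * h t) :=
    intervalIntegral.integral_add_adjacent_intervals i1 i2
  have hbound : (∫ t in a..b, 1 / (t * h t)) ≤ 1 := by
    have h1 : (∫ t in a..b, 1 / (t * h t)) ≤ ∫ _t in a..b, 1 / (a * h a) := by
      apply intervalIntegral.integral_mono_on hab i1 intervalIntegrable_const
      intro x hx
      exact hganti ⟨le_rfl, ha1⟩ ⟨hx.1, le_trans hx.2 hb1⟩ hx.1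
    rw [intervalIntegral.integral_const, smul_eq_mul] at h1
    have h2 : (b - a) * (1 / (a * h a)) = 1 := by
      rw [hb_eq]
      field_simp
      ring
    linarith
  rw [hf b ⟨hb0, hb1⟩, hf a ⟨ha0, ha1⟩, ← Real.exp_sub]
  apply Real.exp_le_exp.mpr
  linarith
end

section
/- Let λ > 1, define h : (0, 1) → (0, ∞) by h(x) = ( −ln( 1 − exp( −(−ln x)^{−1/3} ) ) )^{−1/λ}, and set δ(r) = r · h(r/2) for r ∈ (0, 1). Then for every C > 1, lim_{r→0⁺} (ln r) · ln( 1 − (1/(2C)) exp( −(r/δ(r))^{λ} ) ) = +∞. (That is, the non-doubling order δ(r) = r h(r/2) satisfies the growth condition required in the continuity theorem.) -/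
open Filter Set

/-- For `λ > 1`, `h(x) = (−ln(1 − exp(−(−ln x)^(−1/3))))^(−1/λ)` and `δ(r) = r h(r/2)`,
the growth condition `(ln r)·ln(1 − (1/(2C)) exp(−(r/δ(r))^λ)) → +∞` as `r → 0⁺` holds
for every `C > 1`. -/
theorem stmt14 (lam : ℝ) (hlam : 1 < lam)
    (h : ℝ → ℝ)
    (hdef : ∀ x ∈ Set.Ioo (0 : ℝ) 1,
      h x = (-Real.log (1 - Real.exp (-((-Real.log x) ^ (-(1 / 3) : ℝ))))) ^ (-(1 / lam)))
    (δ : ℝ → ℝ) (hδ : ∀ r ∈ Set.Ioo (0 : ℝ) 1, δ r = r * h (r / 2)) :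
    ∀ C : ℝ, 1 < C →
      Tendsto
        (fun r => Real.log r *
          Real.log (1 - (1 / (2 * C)) * Real.exp (-((r / δ r) ^ lam))))
        (nhdsWithin 0 (Set.Ioi 0)) atTop := by
  intro C hC
  have hC0 : (0:ℝ) < C := lt_trans one_pos hC
  have hlam0 : lam ≠ 0 := by linarith
  -- lower bound tends to atTop
  have hlb : Tendsto (fun r : ℝ => (-Real.log r) ^ ((2:ℝ)/3) / (12 * C))
      (nhdsWithin 0 (Set.Ioi 0)) atTop := by
    apply Tendsto.atTop_div_const (by positivity)
    apply (tendsto_rpow_atTop (by norm_num : (0:ℝ) < 2/3)).comp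
    exact tendsto_neg_atBot_atTop.comp Real.tendsto_log_nhdsGT_zero
  refine tendsto_atTop_mono' _ ?_ hlb
  have hmem : Set.Ioo (0:ℝ) (Real.exp (-1)) ∈ nhdsWithin (0:ℝ) (Set.Ioi 0) := by
    apply Ioo_mem_nhdsGT_of_mem
    exact ⟨le_refl 0, Real.exp_pos _⟩
  filter_upwards [hmem] with r hr
  obtain ⟨hr0, hre⟩ := hr
  have hre1 : Real.exp (-1 : ℝ) < 1 := by
    rw [Real.exp_lt_one_iff]; norm_num
  have hr1 : r < 1 := hre.trans hre1
  -- X = -log r > 1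
  set X := -Real.log r with hXdef
  clear_value X
  have hX1 : 1 < X := by
    have := Real.log_lt_log hr0 hre
    rw [Real.log_exp] at this
    simp only [hXdef]; linarith
  have hX0 : (0:ℝ) < X := by linarith
  -- L = -log (r/2) = X + log 2
  have hlog2 : Real.log (r / 2) = Real.log r - Real.log 2 := by
    rw [Real.log_div (ne_of_gt hr0) (by norm_num)]
  set L := X + Real.log 2 with hLdef
  clear_value L
  have hL : -Real.log (r / 2) = L := by
    rw [hlog2]; simp [hLdef, hXdef]; ring
  have hlog2pos : (0:ℝ) < Real.log 2 := Real.log_pos (by norm_num)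
  have hlog2le1 : Real.log 2 ≤ 1 := by
    have := Real.log_le_sub_one_of_pos (by norm_num : (0:ℝ) < 2)
    linarith
  have hL1 : 1 < L := by simp only [hLdef]; linarith
  have hL0 : (0:ℝ) < L := by linarith
  -- u = L^{-1/3}
  set u := L ^ (-(1/3) : ℝ) with hudef
  clear_value u
  have hu0 : 0 < u := by rw [hudef]; exact Real.rpow_pos_of_pos hL0 _
  have hu1 : u ≤ 1 := by rw [hudef]; exact Real.rpow_le_one_of_one_le_of_nonpos hL1.le (by norm_num)
  -- E = exp (-u)
  set E := Real.exp (-u) with hEdef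
  clear_value E
  have hE0 : 0 < E := by rw [hEdef]; exact Real.exp_pos _
  have hE1 : E < 1 := by
    rw [hEdef, Real.exp_lt_one_iff]; linarith
  have h1E0 : 0 < 1 - E := by linarith
  have h1E1 : 1 - E < 1 := by linarith
  -- B = -log(1 - E) > 0
  set B := -Real.log (1 - E) with hBdef
  clear_value B
  have hB0 : 0 < B := by
    have := Real.log_neg h1E0 h1E1
    simp only [hBdef]; linarith
  -- h (r/2) = B ^ (-(1/lam))
  have hr2 : r / 2 ∈ Set.Ioo (0:ℝ) 1 := ⟨by linarith, by linarith⟩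
  have hh : h (r / 2) = B ^ (-(1/lam) : ℝ) := by
    rw [hdef _ hr2, hL, ← hudef, ← hEdef, ← hBdef]
  have hδr : δ r = r * B ^ (-(1/lam) : ℝ) := by
    rw [hδ r ⟨hr0, hr1⟩, hh]
  -- r / δ r = B ^ (1/lam)
  have hBpow_pos : (0:ℝ) < B ^ (-(1/lam) : ℝ) := Real.rpow_pos_of_pos hB0 _
  have hratio : r / δ r = B ^ ((1/lam) : ℝ) := by
    rw [hδr, div_mul_eq_div_div, div_self hr0.ne', one_div,
      Real.rpow_neg hB0.le, inv_inv]
  -- (r / δ r) ^ lam = B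
  have hpow : (r / δ r) ^ lam = B := by
    rw [hratio, ← Real.rpow_mul hB0.le, one_div, inv_mul_cancel₀ hlam0, Real.rpow_one]
  -- exp (-(r/δ r)^lam) = 1 - E
  have hexp : Real.exp (-((r / δ r) ^ lam)) = 1 - E := by
    rw [hpow, hBdef, neg_neg, Real.exp_log h1E0]
  rw [hexp]
  -- t = (1/(2C)) * (1 - E)
  set t := (1 / (2 * C)) * (1 - E) with htdef
  clear_value t
  have ht0 : 0 < t := by rw [htdef]; positivity
  have ht1 : t < 1 := by
    rw [htdef]
    have h2C : 1 / (2 * C) < 1 := by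
      rw [div_lt_one (by linarith)]; linarith
    have h2C0 : (0:ℝ) < 1 / (2 * C) := by positivity
    nlinarith
  -- log (1 - t) ≤ -t
  have hlogt : Real.log (1 - t) ≤ -t := by
    have := Real.log_le_sub_one_of_pos (by linarith : (0:ℝ) < 1 - t)
    linarith
  -- 1 - E ≥ u / 3
  have hexp3 : (1:ℝ)/3 < Real.exp (-u) := by
    have h1 : Real.exp (-u) ≥ Real.exp (-1) := Real.exp_le_exp.mpr (by linarith)
    have h2 : Real.exp (1:ℝ) < 3 := by
      have := Real.exp_one_lt_d9; linarith
    have h3 : (1:ℝ)/3 < Real.exp (-1) := by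
      rw [Real.exp_neg, div_lt_iff₀ (by norm_num : (0:ℝ) < 3)]
      rw [inv_mul_eq_div, lt_div_iff₀ (Real.exp_pos 1)]
      linarith
    linarith
  have h1Eu : u / 3 ≤ 1 - E := by
    have h1 : u ≤ Real.exp u - 1 := by linarith [Real.add_one_le_exp u]
    have h2 : Real.exp (-u) * (Real.exp u - 1) = 1 - E := by
      rw [mul_sub, ← Real.exp_add, neg_add_cancel, Real.exp_zero, mul_one, hEdef]
    have h3 : u / 3 ≤ Real.exp (-u) * u :=
      calc u / 3 = (1/3) * u := by ring
        _ ≤ Real.exp (-u) * u := mul_le_mul_of_nonneg_right hexp3.le hu0.le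
    have h4 : Real.exp (-u) * u ≤ Real.exp (-u) * (Real.exp u - 1) :=
      mul_le_mul_of_nonneg_left h1 (Real.exp_pos _).le
    linarith
  -- t ≥ u / (6 C)
  have htu : u / (6 * C) ≤ t := by
    have heq : u / (6 * C) = 1 / (2 * C) * (u / 3) := by
      rw [div_mul_div_comm, one_mul]; ring
    rw [htdef, heq]
    exact mul_le_mul_of_nonneg_left h1Eu (by positivity)
  -- u ≥ (1/2) * X^{-1/3}
  have huX : (1/2 : ℝ) * X ^ (-(1/3) : ℝ) ≤ u := by
    have hL2X : L ≤ 2 * X := by simp only [hLdef]; linarith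
    have h1 : (2 * X) ^ (-(1/3) : ℝ) ≤ u := by
      rw [hudef]
      exact Real.rpow_le_rpow_of_nonpos hL0 hL2X (by norm_num)
    have h2 : (2 * X) ^ (-(1/3) : ℝ) = 2 ^ (-(1/3) : ℝ) * X ^ (-(1/3) : ℝ) :=
      Real.mul_rpow (by norm_num) hX0.le
    have h3 : (1/2 : ℝ) ≤ 2 ^ (-(1/3) : ℝ) := by
      have : (2:ℝ) ^ (-1 : ℝ) ≤ 2 ^ (-(1/3) : ℝ) :=
        Real.rpow_le_rpow_of_exponent_le (by norm_num) (by norm_num)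
      rwa [Real.rpow_neg_one, show ((2:ℝ))⁻¹ = 1/2 by norm_num] at this
    have hXp : (0:ℝ) < X ^ (-(1/3) : ℝ) := Real.rpow_pos_of_pos hX0 _
    calc (1/2:ℝ) * X ^ (-(1/3):ℝ) ≤ 2 ^ (-(1/3):ℝ) * X ^ (-(1/3):ℝ) :=
          mul_le_mul_of_nonneg_right h3 hXp.le
      _ = (2*X) ^ (-(1/3):ℝ) := h2.symm
      _ ≤ u := h1
  -- put it all together
  have key : X * t ≤ Real.log r * Real.log (1 - t) := by
    have h1 : t ≤ -Real.log (1 - t) := by linarith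
    have h2 : Real.log r * Real.log (1 - t) = X * (-Real.log (1 - t)) := by
      simp only [hXdef]; ring
    rw [h2]
    exact mul_le_mul_of_nonneg_left h1 hX0.le
  have hXX : X * ((1/2 : ℝ) * X ^ (-(1/3) : ℝ)) = (1/2 : ℝ) * X ^ ((2:ℝ)/3) := by
    have : X * X ^ (-(1/3) : ℝ) = X ^ ((2:ℝ)/3) := by
      have h' := Real.rpow_add hX0 1 (-(1/3))
      rw [Real.rpow_one] at h'
      rw [show ((2:ℝ)/3) = 1 + (-(1/3)) by norm_num, h']
    calc X * ((1/2 : ℝ) * X ^ (-(1/3) : ℝ)) = (1/2:ℝ) * (X * X ^ (-(1/3) : ℝ)) := by ring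
      _ = (1/2 : ℝ) * X ^ ((2:ℝ)/3) := by rw [this]
  have chain : X ^ ((2:ℝ)/3) / (12 * C) ≤ X * t := by
    have h1 : X * (u / (6 * C)) ≤ X * t := mul_le_mul_of_nonneg_left htu hX0.le
    have h2 : X * (((1/2 : ℝ) * X ^ (-(1/3) : ℝ)) / (6 * C)) ≤ X * (u / (6 * C)) := by
      apply mul_le_mul_of_nonneg_left _ hX0.le
      apply div_le_div_of_nonneg_right huX (by positivity)
    have h3 : X * (((1/2 : ℝ) * X ^ (-(1/3) : ℝ)) / (6 * C)) = X ^ ((2:ℝ)/3) / (12 * C) := by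
      rw [mul_div_assoc'] at *
      rw [hXX]; ring
    linarith
  exact le_trans chain key
end
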